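/- Let A and B be self-adjoint operators on a Hilbert space with unit eigenvectors u_i (eigenvalue λ_i(A)) and w_i (eigenvalue λ_i(B)) respectively. If ⟨u_i, w_i⟩ ≠ 0, then |λ_i(A) − λ_i(B)| ≤ ‖(A − B) u_i‖ / |⟨u_i, w_i⟩|. -/
import Mathlib

open scoped RealInnerProductSpace

/-- Eigenvalue perturbation: if `u`, `w` are unit eigenvectors of the self-adjoint operators
`A`, `B` with eigenvalues `lA`, `lB` and `⟪u, w⟫ ≠ 0`, then
`|lA - lB| ≤ ‖(A - B) u‖ / |⟪u, w⟫|`. -/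
theorem stmt_1
    {H : Type*} [NormedAddCommGroup H] [InnerProductSpace ℝ H] [CompleteSpace H]
    (A B : H →L[ℝ] H) (hA : IsSelfAdjoint A) (hB : IsSelfAdjoint B)
    (u w : H) (lA lB : ℝ)
    (hu : ‖u‖ = 1) (hw : ‖w‖ = 1)
    (hAu : A u = lA • u) (hBw : B w = lB • w)
    (hne : ⟪u, w⟫ ≠ 0) :
    |lA - lB| ≤ ‖(A - B) u‖ / |⟪u, w⟫| := by
  have hsym : ⟪B w, u⟫ = ⟪w, B u⟫ := hB.isSymmetric w u
  have key : ⟪w, (A - B) u⟫ = (lA - lB) * ⟪w, u⟫ := by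
    have : ⟪w, A u⟫ - ⟪w, B u⟫ = lA * ⟪w, u⟫ - lB * ⟪w, u⟫ := by
      rw [hAu, ← hsym, hBw, real_inner_smul_right, real_inner_smul_left]
    simpa [ContinuousLinearMap.sub_apply, inner_sub_right, sub_mul] using this
  have hb : |⟪w, (A - B) u⟫| ≤ ‖(A - B) u‖ := by
    calc |⟪w, (A - B) u⟫| ≤ ‖w‖ * ‖(A - B) u‖ := abs_real_inner_le_norm _ _
      _ = ‖(A - B) u‖ := by rw [hw, one_mul]
  have hwu : ⟪w, u⟫ = ⟪u, w⟫ := real_inner_comm u w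
  rw [key, abs_mul, hwu] at hb
  exact (le_div_iff₀ (abs_pos.mpr hne)).mpr hb
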